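/- arXiv:math/0703212 — 3 statements merged into one kernel-verified Lean document; each statement's English description precedes it below -/
import Mathlib

section
/- Let 0 < p < q be coprime integers and let n_j/m_j be the Hirzebruch-Jung continued-fraction approximants to p/q (so m_0 = 0, n_0 = -1, m_1 = 1, n_1 = 0, m_{j+1} = e_j m_j - m_{j-1}, n_{j+1} = e_j n_j - n_{j-1}, with (m_{k+1}, n_{k+1}) = (q, p)). Then for every j with 1 ≤ j ≤ k, p/q - n_j/m_j + 1/q - 1/m_j ≤ 0, with equality if and only if e_1 = e_2 = ... = e_k = 2. -/
set_option maxHeartbeats 2000000 in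
/-- Lemma 6.5.2: for the Hirzebruch-Jung approximants `n j / m j` of `p/q`
(with `(m (k+1), n (k+1)) = (q, p)`), for every `1 ≤ j ≤ k` one has
`p/q - n j/m j + 1/q - 1/m j ≤ 0`, with equality iff `e 1 = ⋯ = e k = 2`. -/
theorem stmt_3 (p q : ℕ) (hp : 0 < p) (hpq : p < q) (hcop : Nat.Coprime p q)
    (k : ℕ) (hk : 1 ≤ k) (m n e : ℕ → ℤ)
    (he : ∀ j, 1 ≤ j → j ≤ k → 2 ≤ e j)
    (hm0 : m 0 = 0) (hn0 : n 0 = -1) (hm1 : m 1 = 1) (hn1 : n 1 = 0)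
    (hmrec : ∀ j, 1 ≤ j → j ≤ k → m (j + 1) = e j * m j - m (j - 1))
    (hnrec : ∀ j, 1 ≤ j → j ≤ k → n (j + 1) = e j * n j - n (j - 1))
    (hmk : m (k + 1) = (q : ℤ)) (hnk : n (k + 1) = (p : ℤ)) :
    ∀ j, 1 ≤ j → j ≤ k →
      ((p : ℝ) / q - (n j : ℝ) / (m j : ℝ) + 1 / q - 1 / (m j : ℝ) ≤ 0 ∧
        ((p : ℝ) / q - (n j : ℝ) / (m j : ℝ) + 1 / q - 1 / (m j : ℝ) = 0 ↔
          ∀ i, 1 ≤ i → i ≤ k → e i = 2)) := by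
  -- auxiliary sequences
  set a : ℕ → ℤ := fun j => p * m j - q * n j with ha_def
  set c : ℕ → ℤ := fun j => a j + m j with hc_def
  set d : ℕ → ℤ := fun j => c (j + 1) - c j with hd_def
  -- determinant
  have hdet : ∀ j, j ≤ k → m (j + 1) * n j - m j * n (j + 1) = -1 := by
    intro j hj
    induction j with
    | zero => rw [hm0, hn0, hm1, hn1]; ring
    | succ i ih =>
      have h1 : 1 ≤ i + 1 := by omega
      have h2 : i + 1 ≤ k := hj
      have hm' := hmrec (i + 1) h1 h2
      have hn' := hnrec (i + 1) h1 h2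
      simp only [Nat.add_sub_cancel] at hm' hn'
      rw [hm', hn']
      have := ih (by omega)
      nlinarith [this]
  -- a at k and k+1
  have hak : a k = 1 := by
    have := hdet k le_rfl
    rw [hmk, hnk] at this
    simp only [ha_def]
    linarith
  have hak1 : a (k + 1) = 0 := by
    simp only [ha_def]; rw [hmk, hnk]; ring
  -- backward positivity of a
  have hback : ∀ t, t ≤ k → 0 ≤ a (k + 1 - t) ∧ a (k + 1 - t) < a (k - t) := by
    intro t ht
    induction t with
    | zero => simpa [hak1, hak] using (by norm_num : (0:ℤ) < 1)
    | succ s ih =>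
      obtain ⟨h0, h1⟩ := ih (by omega)
      set j := k - s with hj
      have hj1 : 1 ≤ j := by omega
      have hj2 : j ≤ k := by omega
      have e1 : k + 1 - s = j + 1 := by omega
      have e2 : k + 1 - (s + 1) = j := by omega
      have e3 : k - (s + 1) = j - 1 := by omega
      rw [e1] at h0 h1
      rw [e2, e3]
      have hm' := hmrec j hj1 hj2
      have hn' := hnrec j hj1 hj2
      have harec : a (j + 1) = e j * a j - a (j - 1) := by
        simp only [ha_def]; rw [hm', hn']; ring
      have hej := he j hj1 hj2
      constructor
      · linarith
      · nlinarith
  have hapos : ∀ j, 1 ≤ j → j ≤ k → 0 < a j := by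
    intro j h1 h2
    have := hback (k - j) (by omega)
    rw [show k + 1 - (k - j) = j + 1 by omega, show k - (k - j) = j by omega] at this
    linarith [this.1, this.2]
  -- m positivity
  have hmpos : ∀ j, j ≤ k → 1 ≤ m (j + 1) - m j ∧ 1 ≤ m (j + 1) := by
    intro j hj
    induction j with
    | zero => rw [hm0, hm1]; norm_num
    | succ i ih =>
      obtain ⟨h0, h1⟩ := ih (by omega)
      have hm' := hmrec (i + 1) (by omega) hj
      simp only [Nat.add_sub_cancel] at hm'
      have hej := he (i + 1) (by omega) hj
      constructor <;> nlinarith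
  have hm : ∀ j, 1 ≤ j → j ≤ k + 1 → 1 ≤ m j := by
    intro j h1 h2
    have := (hmpos (j - 1) (by omega)).2
    rwa [show j - 1 + 1 = j by omega] at this
  -- c values
  have hc0 : c 0 = (q : ℤ) := by simp [hc_def, ha_def, hm0, hn0]
  have hck1 : c (k + 1) = (q : ℤ) := by
    simp only [hc_def]; rw [hak1, hmk]; ring
  have hcrec : ∀ j, 1 ≤ j → j ≤ k → c (j + 1) = e j * c j - c (j - 1) := by
    intro j h1 h2
    simp only [hc_def, ha_def]
    rw [hmrec j h1 h2, hnrec j h1 h2]; ring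
  have hcpos : ∀ j, 1 ≤ j → j ≤ k → 0 < c j := by
    intro j h1 h2
    have := hapos j h1 h2
    have := hm j h1 (by omega)
    simp only [hc_def]; linarith
  -- second difference
  have hdd : ∀ j, 1 ≤ j → j ≤ k → d j - d (j - 1) = (e j - 2) * c j := by
    intro j h1 h2
    simp only [hd_def]
    rw [show j - 1 + 1 = j by omega, hcrec j h1 h2]
    ring
  have hdstep : ∀ j, 1 ≤ j → j ≤ k → d (j - 1) ≤ d j := by
    intro j h1 h2
    have h := hdd j h1 h2
    have h3 := hcpos j h1 h2
    have h4 := he j h1 h2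
    have h5 : 0 ≤ (e j - 2) * c j := mul_nonneg (by linarith) (le_of_lt h3)
    linarith
  have hdmono0 : ∀ t i, i + t ≤ k → d i ≤ d (i + t) := by
    intro t
    induction t with
    | zero => intro i _; exact le_rfl
    | succ s ih =>
      intro i h
      have h1 := hdstep (i + s + 1) (by omega) (by omega)
      simp only [Nat.add_sub_cancel] at h1
      have h2 := ih i (by omega)
      calc d i ≤ d (i + s) := h2
        _ ≤ d (i + s + 1) := h1
  have hdmono : ∀ i j, i ≤ j → j ≤ k → d i ≤ d j := by
    intro i j hij hjk
    have := hdmono0 (j - i) i (by omega)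
    rwa [show i + (j - i) = j by omega] at this
  -- telescoping
  have htel : ∀ N, ∑ i ∈ Finset.range N, d i = c N - c 0 := by
    intro N
    simp only [hd_def]
    exact Finset.sum_range_sub c N
  have htot : ∑ i ∈ Finset.range (k + 1), d i = 0 := by
    rw [htel, hck1, hc0]; ring
  -- main argument, fix j
  intro j hj1 hjk
  -- sum splits
  have hsplit : (∑ i ∈ Finset.range j, d i) + (∑ i ∈ Finset.Ico j (k + 1), d i) = 0 := by
    rw [← htot, Finset.range_eq_Ico, Finset.range_eq_Ico]
    exact Finset.sum_Ico_consecutive d (by omega : 0 ≤ j) (by omega : j ≤ k + 1)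
  have hS1 : ∑ i ∈ Finset.range j, d i = c j - (q : ℤ) := by rw [htel, hc0]
  have hS1le : ∑ i ∈ Finset.range j, d i ≤ (j : ℤ) * d (j - 1) := by
    calc ∑ i ∈ Finset.range j, d i ≤ ∑ _i ∈ Finset.range j, d (j - 1) := by
          apply Finset.sum_le_sum
          intro i hi
          exact hdmono i (j - 1) (by simp at hi; omega) (by omega)
      _ = (j : ℤ) * d (j - 1) := by
          rw [Finset.sum_const, Finset.card_range, nsmul_eq_mul]
  have hS2ge : ((k + 1 - j : ℕ) : ℤ) * d j ≤ ∑ i ∈ Finset.Ico j (k + 1), d i := by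
    calc ((k + 1 - j : ℕ) : ℤ) * d j = ∑ _i ∈ Finset.Ico j (k + 1), d j := by
          rw [Finset.sum_const, Nat.card_Ico, nsmul_eq_mul]
      _ ≤ ∑ i ∈ Finset.Ico j (k + 1), d i := by
          apply Finset.sum_le_sum
          intro i hi
          simp at hi
          exact hdmono j i hi.1 (by omega)
  -- inequality c j ≤ q
  have hcle : c j ≤ (q : ℤ) := by
    by_contra h
    push_neg at h
    have h1 : 0 < (j : ℤ) * d (j - 1) := lt_of_lt_of_le (by linarith [hS1, hS1le]) hS1le
    have hd1 : 0 < d (j - 1) := by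
      rcases le_or_gt (d (j - 1)) 0 with h2 | h2
      · exfalso
        have : (j : ℤ) * d (j - 1) ≤ 0 :=
          mul_nonpos_iff.mpr (Or.inl ⟨by positivity, h2⟩)
        linarith
      · exact h2
    have hd2 : 0 < d j := lt_of_lt_of_le hd1 (by
      have := hdstep j hj1 hjk; linarith)
    have h3 : 0 < ∑ i ∈ Finset.Ico j (k + 1), d i := by
      have hcard : (1 : ℤ) ≤ ((k + 1 - j : ℕ) : ℤ) := by
        have : 1 ≤ k + 1 - j := by omega
        exact_mod_cast this
      nlinarith [hS2ge]
    have h4 : 0 < ∑ i ∈ Finset.range j, d i := by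
      rw [hS1]; linarith
    linarith
  -- the real expression
  have hq0 : (0 : ℝ) < (q : ℝ) := by
    have : 0 < q := by omega
    exact_mod_cast this
  have hmj : (1 : ℤ) ≤ m j := hm j hj1 (by omega)
  have hmj0 : (0 : ℝ) < (m j : ℝ) := by exact_mod_cast lt_of_lt_of_le zero_lt_one hmj
  have hcj : (c j : ℝ) = (p : ℝ) * m j - (q : ℝ) * n j + m j := by
    simp only [hc_def, ha_def]; push_cast; ring
  have hE : (p : ℝ) / q - (n j : ℝ) / (m j : ℝ) + 1 / q - 1 / (m j : ℝ)
      = ((c j : ℝ) - (q : ℝ)) / ((q : ℝ) * (m j : ℝ)) := by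
    rw [hcj]
    field_simp
  constructor
  · rw [hE]
    apply div_nonpos_of_nonpos_of_nonneg
    · have : (c j : ℝ) ≤ (q : ℝ) := by exact_mod_cast hcle
      linarith
    · positivity
  · rw [hE]
    rw [div_eq_zero_iff]
    constructor
    · rintro (h | h)
      · -- equality case: c j = q, deduce all e = 2
        have hceq : c j = (q : ℤ) := by
          have : (c j : ℝ) = (q : ℝ) := by linarith
          exact_mod_cast this
        have hS1z : ∑ i ∈ Finset.range j, d i = 0 := by rw [hS1, hceq]; ring
        have hS2z : ∑ i ∈ Finset.Ico j (k + 1), d i = 0 := by linarith [hsplit, hS1z]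
        -- d (j-1) ≥ 0
        have hd1 : 0 ≤ d (j - 1) := by
          by_contra h2
          push_neg at h2
          have h3 : (j : ℤ) * d (j - 1) < 0 := by
            have hj' : (0 : ℤ) < (j : ℤ) := by exact_mod_cast hj1
            exact mul_neg_of_pos_of_neg hj' h2
          linarith [hS1le, hS1z]
        -- d j ≤ 0
        have hd2 : d j ≤ 0 := by
          by_contra h2
          push_neg at h2
          have hcard : (1 : ℤ) ≤ ((k + 1 - j : ℕ) : ℤ) := by
            have : 1 ≤ k + 1 - j := by omega
            exact_mod_cast this
          nlinarith [hS2ge, hS2z]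
        have hd3 : d (j - 1) = 0 ∧ d j = 0 := by
          have := hdstep j hj1 hjk
          constructor <;> linarith
        -- all d i = 0 for i ≤ k
        have hdzero : ∀ i, i ≤ k → d i = 0 := by
          intro i hik
          rcases lt_or_ge i j with hij | hij
          · have h5 : ∀ x ∈ Finset.range j, d x ≤ 0 := by
              intro x hx
              simp at hx
              calc d x ≤ d (j - 1) := hdmono x (j - 1) (by omega) (by omega)
                _ = 0 := hd3.1
            exact (Finset.sum_eq_zero_iff_of_nonpos h5).mp hS1z i (by simp; omega)
          · have h5 : ∀ x ∈ Finset.Ico j (k + 1), 0 ≤ d x := by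
              intro x hx
              simp at hx
              calc (0:ℤ) = d j := hd3.2.symm
                _ ≤ d x := hdmono j x hx.1 (by omega)
            exact (Finset.sum_eq_zero_iff_of_nonneg h5).mp hS2z i (by simp; omega)
        intro i hi1 hi2
        have h6 := hdd i hi1 hi2
        rw [hdzero i hi2, hdzero (i - 1) (by omega)] at h6
        have h7 := hcpos i hi1 hi2
        have h8 : (e i - 2) * c i = 0 := by linarith
        rcases mul_eq_zero.mp h8 with h9 | h9
        · linarith
        · exfalso; linarith
      · exfalso
        have : (q : ℝ) * (m j : ℝ) ≠ 0 := by positivity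
        exact this h
    · -- all e = 2 implies equality
      intro hall
      left
      have hdeq : ∀ i, i ≤ k → d i = d 0 := by
        intro i hik
        induction i with
        | zero => rfl
        | succ s ih =>
          have h6 := hdd (s + 1) (by omega) hik
          rw [hall (s + 1) (by omega) hik] at h6
          simp only [Nat.add_sub_cancel] at h6
          have : d (s + 1) = d s := by linarith
          rw [this, ih (by omega)]
      have hd0 : d 0 = 0 := by
        have : ∑ i ∈ Finset.range (k + 1), d i = ((k + 1 : ℕ) : ℤ) * d 0 := by
          calc ∑ i ∈ Finset.range (k + 1), d i = ∑ _i ∈ Finset.range (k + 1), d 0 := by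
                apply Finset.sum_congr rfl
                intro x hx
                simp at hx
                exact hdeq x (by omega)
            _ = ((k + 1 : ℕ) : ℤ) * d 0 := by
                rw [Finset.sum_const, Finset.card_range, nsmul_eq_mul]
        rw [htot] at this
        have hk1 : (0 : ℤ) < ((k + 1 : ℕ) : ℤ) := by positivity
        by_contra h2
        rcases lt_or_gt_of_ne h2 with h3 | h3
        · nlinarith
        · nlinarith
      have hcq : c j = (q : ℤ) := by
        have : ∑ i ∈ Finset.range j, d i = 0 := by
          apply Finset.sum_eq_zero
          intro x hx
          simp at hx
          rw [hdeq x (by omega), hd0]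
        rw [hS1] at this
        linarith
      have : (c j : ℝ) = (q : ℝ) := by exact_mod_cast hcq
      linarith
end

section
/- Let 0 < p < q be coprime, let n_j/m_j be the Hirzebruch-Jung approximants to p/q with (m_{k+1}, n_{k+1}) = (q, p), and let u_1, ..., u_k > 0 be arbitrary positive reals. Then μ := Σ_{j=1}^k (p/q - n_j/m_j + 1/q - 1/m_j) u_j ≤ 0, with μ = 0 if and only if p = q - 1. -/
open Finset

set_option maxHeartbeats 1600000 in
/-- Theorem 6.5.1 (sign of the log-term/mass coefficient): for the
Hirzebruch-Jung approximants `n j / m j` of `p/q` and any positive reals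
`u 1, …, u k`, the quantity
`μ = ∑_{j=1}^k (p/q - n j/m j + 1/q - 1/m j) * u j` is non-positive, and
`μ = 0` iff `p = q - 1`. -/
theorem stmt_5 (p q : ℕ) (hp : 0 < p) (hpq : p < q) (hcop : Nat.Coprime p q)
    (k : ℕ) (hk : 1 ≤ k) (m n e : ℕ → ℤ) (u : ℕ → ℝ)
    (he : ∀ j, 1 ≤ j → j ≤ k → 2 ≤ e j)
    (hm0 : m 0 = 0) (hn0 : n 0 = -1) (hm1 : m 1 = 1) (hn1 : n 1 = 0)
    (hmrec : ∀ j, 1 ≤ j → j ≤ k → m (j + 1) = e j * m j - m (j - 1))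
    (hnrec : ∀ j, 1 ≤ j → j ≤ k → n (j + 1) = e j * n j - n (j - 1))
    (hmk : m (k + 1) = (q : ℤ)) (hnk : n (k + 1) = (p : ℤ))
    (hu : ∀ j, 1 ≤ j → j ≤ k → 0 < u j) :
    (∑ j ∈ Icc 1 k,
        ((p : ℝ) / q - (n j : ℝ) / (m j : ℝ) + 1 / q - 1 / (m j : ℝ)) * u j ≤ 0) ∧
    ((∑ j ∈ Icc 1 k,
        ((p : ℝ) / q - (n j : ℝ) / (m j : ℝ) + 1 / q - 1 / (m j : ℝ)) * u j = 0)
      ↔ p = q - 1) := by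
  have hq0 : 0 < q := hp.trans hpq
  have hqR : (0:ℝ) < (q:ℝ) := by exact_mod_cast hq0
  -- m increases with steps ≥ 1
  have hmstep : ∀ i, 1 ≤ i → i ≤ k+1 → 1 ≤ m i - m (i-1) ∧ 0 ≤ m (i-1) := by
    intro i
    induction i with
    | zero => omega
    | succ t ih =>
      intro _ hle
      rcases Nat.eq_zero_or_pos t with h0 | h1
      · subst h0; simp [hm0, hm1]
      · have ht : t ≤ k := by omega
        obtain ⟨ih1, ih2⟩ := ih h1 (by omega)
        have hrec := hmrec t h1 ht
        have he2 := he t h1 ht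
        simp only [Nat.add_sub_cancel]
        have hmt : (0:ℤ) ≤ m t := by linarith
        have hx : 0 ≤ (e t - 2) * m t := mul_nonneg (by linarith) hmt
        constructor
        · rw [hrec]; nlinarith [hx]
        · linarith
  have hmpos : ∀ i, 1 ≤ i → i ≤ k+1 → 1 ≤ m i := by
    intro i h1 h2
    obtain ⟨a, b⟩ := hmstep i h1 h2
    linarith
  -- determinant identity
  have hdet : ∀ i, i ≤ k → n (i+1) * m i - m (i+1) * n i = 1 := by
    intro i
    induction i with
    | zero => intro _; simp [hm0, hm1, hn0, hn1]
    | succ t ih =>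
      intro hle
      have h1 : 1 ≤ t+1 := by omega
      have ihh := ih (by omega)
      rw [hmrec (t+1) h1 hle, hnrec (t+1) h1 hle]
      simp only [Nat.add_sub_cancel]
      linear_combination ihh
  -- nonpositivity of the numerator
  have hnum : ∀ j, 1 ≤ j → j ≤ k → (p:ℤ) * m j - (q:ℤ) * n j + m j - q ≤ 0 := by
    intro j hj1 hjk
    have key : ∀ i, j+1 ≤ i → i ≤ k+1 →
        (0 ≤ m (i-1) - m j - (n (i-1) * m j - m (i-1) * n j)) ∧
        (m (i-1) - m j - (n (i-1) * m j - m (i-1) * n j) ≤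
          m i - m j - (n i * m j - m i * n j)) := by
      intro i
      induction i with
      | zero => omega
      | succ t ih =>
        intro hlo hhi
        simp only [Nat.add_sub_cancel]
        rcases eq_or_lt_of_le hlo with heq | hlt
        · have ht : t = j := by omega
          subst ht
          have hd := hdet t (by omega)
          have hstep := hmstep (t+1) (by omega) (by omega)
          simp only [Nat.add_sub_cancel] at hstep
          constructor
          · have : n t * m t - m t * n t = 0 := by ring
            linarith
          · have : n t * m t - m t * n t = 0 := by ring
            linarith
        · have ht1 : j + 1 ≤ t := by omega
          have htk : t ≤ k := by omega
          have ht1' : 1 ≤ t := by omega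
          obtain ⟨ih0, ih1⟩ := ih ht1 (by omega)
          have hrecm := hmrec t ht1' htk
          have hrecn := hnrec t ht1' htk
          have he2 := he t ht1' htk
          have hmj : (1:ℤ) ≤ m j := hmpos j hj1 (by omega)
          have hAt : 0 ≤ m t - m j - (n t * m j - m t * n j) := le_trans ih0 ih1
          have h1 : 0 ≤ (e t - 2) * (m t - m j - (n t * m j - m t * n j)) :=
            mul_nonneg (by linarith) hAt
          have h2 : 0 ≤ (e t - 2) * m j := mul_nonneg (by linarith) (by linarith)
          constructor
          · exact hAt
          · rw [hrecm, hrecn]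
            nlinarith [h1, h2, ih0, ih1]
    obtain ⟨K0, K1⟩ := key (k+1) (by omega) le_rfl
    simp only [Nat.add_sub_cancel] at K0 K1
    rw [hmk, hnk] at K1
    linarith
  -- coefficient formula and sign
  have hcoeff : ∀ j, 1 ≤ j → j ≤ k →
      (p:ℝ)/q - (n j : ℝ)/(m j : ℝ) + 1/q - 1/(m j : ℝ)
        = (((p:ℤ) * m j - (q:ℤ) * n j + m j - q : ℤ) : ℝ) / ((q:ℝ) * (m j : ℝ)) := by
    intro j hj1 hjk
    have hmj : (0:ℝ) < (m j : ℝ) := by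
      have := hmpos j hj1 (by omega)
      exact_mod_cast lt_of_lt_of_le zero_lt_one (by exact_mod_cast this)
    push_cast
    field_simp
  have hcle : ∀ j, 1 ≤ j → j ≤ k →
      (p:ℝ)/q - (n j : ℝ)/(m j : ℝ) + 1/q - 1/(m j : ℝ) ≤ 0 := by
    intro j hj1 hjk
    rw [hcoeff j hj1 hjk]
    apply div_nonpos_of_nonpos_of_nonneg
    · exact_mod_cast hnum j hj1 hjk
    · have hmj : (1:ℝ) ≤ (m j : ℝ) := by exact_mod_cast hmpos j hj1 (by omega)
      positivity
  have hterm : ∀ j ∈ Icc 1 k,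
      ((p : ℝ) / q - (n j : ℝ) / (m j : ℝ) + 1 / q - 1 / (m j : ℝ)) * u j ≤ 0 := by
    intro j hj
    rw [mem_Icc] at hj
    exact mul_nonpos_iff.2 (Or.inr ⟨hcle j hj.1 hj.2, (hu j hj.1 hj.2).le⟩)
  have hsum : ∑ j ∈ Icc 1 k,
      ((p : ℝ) / q - (n j : ℝ) / (m j : ℝ) + 1 / q - 1 / (m j : ℝ)) * u j ≤ 0 :=
    Finset.sum_nonpos hterm
  refine ⟨hsum, ?_, ?_⟩
  · -- sum = 0 → p = q - 1
    intro h0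
    have hall := (Finset.sum_eq_zero_iff_of_nonpos hterm).1 h0
    have h1 := hall 1 (by rw [mem_Icc]; omega)
    rw [hm1, hn1] at h1
    push_cast at h1
    have hu1 : u 1 ≠ 0 := (hu 1 le_rfl hk).ne'
    have hc1 : (p : ℝ) / q - 0 / 1 + 1 / (q:ℝ) - 1 / 1 = 0 := by
      rcases mul_eq_zero.1 h1 with h | h
      · exact h
      · exact absurd h hu1
    have : (p : ℝ) + 1 = q := by
      field_simp at hc1
      linarith
    have hnat : p + 1 = q := by exact_mod_cast this
    omega
  · -- p = q - 1 → sum = 0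
    intro hpq1
    have hq1 : p + 1 = q := by omega
    have hq1' : (p:ℤ) + 1 = q := by exact_mod_cast hq1
    -- s i := m i - n i is nondecreasing with s(i) ≥ 1
    have hs : ∀ i, 1 ≤ i → i ≤ k+1 →
        m (i-1) - n (i-1) ≤ m i - n i ∧ 1 ≤ m (i-1) - n (i-1) := by
      intro i
      induction i with
      | zero => omega
      | succ t ih =>
        intro _ hle
        rcases Nat.eq_zero_or_pos t with h0 | h1
        · subst h0; simp [hm0, hm1, hn0, hn1]
        · have ht : t ≤ k := by omega
          obtain ⟨ih1, ih2⟩ := ih h1 (by omega)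
          have hrm := hmrec t h1 ht
          have hrn := hnrec t h1 ht
          have he2 := he t h1 ht
          simp only [Nat.add_sub_cancel]
          have hst : (1:ℤ) ≤ m t - n t := by linarith
          have hx : 0 ≤ (e t - 2) * (m t - n t) := mul_nonneg (by linarith) (by linarith)
          constructor
          · rw [hrm, hrn]; nlinarith [hx]
          · linarith
    have hmono : ∀ a b : ℕ, a ≤ b → b ≤ k+1 → m a - n a ≤ m b - n b := by
      intro a b hab hbk
      induction b with
      | zero =>
        have : a = 0 := by omega
        subst this; exact le_rfl
      | succ t ih =>
        rcases Nat.lt_or_ge a (t+1) with h | h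
        · have step := (hs (t+1) (by omega) hbk).1
          simp only [Nat.add_sub_cancel] at step
          exact le_trans (ih (by omega) (by omega)) step
        · have : a = t+1 := by omega
          subst this; exact le_rfl
    have hs1 : ∀ i, i ≤ k+1 → m i - n i = 1 := by
      intro i hi
      have hge : 1 ≤ m i - n i := by
        rcases Nat.eq_zero_or_pos i with h0 | h1
        · subst h0; rw [hm0, hn0]; norm_num
        · obtain ⟨a, b⟩ := hs i h1 hi
          linarith
      have hle' : m i - n i ≤ m (k+1) - n (k+1) := hmono i (k+1) (by omega) le_rfl
      rw [hmk, hnk] at hle'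
      linarith
    have he2' : ∀ t, 1 ≤ t → t ≤ k → e t = 2 := by
      intro t h1 h2
      have a := hs1 (t-1) (by omega)
      have b := hs1 t (by omega)
      have c := hs1 (t+1) (by omega)
      have r : m (t+1) - n (t+1) = e t * (m t - n t) - (m (t-1) - n (t-1)) := by
        rw [hmrec t h1 h2, hnrec t h1 h2]; ring
      rw [a, b, c] at r
      linarith
    -- m i = i for i ≤ k+1
    have hmval : ∀ i, i ≤ k → m i = (i:ℤ) ∧ m (i+1) = (i:ℤ) + 1 := by
      intro i
      induction i with
      | zero => intro _; exact ⟨by simpa using hm0, by simpa using hm1⟩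
      | succ t ih =>
        intro hle
        obtain ⟨a, b⟩ := ih (by omega)
        refine ⟨by push_cast; linarith [b], ?_⟩
        rw [hmrec (t+1) (by omega) hle, he2' (t+1) (by omega) hle]
        simp only [Nat.add_sub_cancel]
        rw [a, b]; push_cast; ring
    apply Finset.sum_eq_zero
    intro j hj
    rw [mem_Icc] at hj
    obtain ⟨hj1, hjk⟩ := hj
    have hmj : m j = (j:ℤ) := by
      rcases Nat.lt_or_ge j k with h | h
      · exact (hmval j (by omega)).1
      · have hjk' : j = k := by omega
        subst hjk'
        exact (hmval j (le_refl j)).1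
    have hnj : n j = (j:ℤ) - 1 := by
      have := hs1 j (by omega)
      linarith
    have hqv : (q:ℤ) = (k:ℤ) + 1 := by
      have := (hmval k le_rfl).2
      rw [hmk] at this
      linarith
    have hpv : (p:ℤ) = (k:ℤ) := by linarith
    have hjR : (0:ℝ) < (j:ℝ) := by exact_mod_cast hj1
    have hqR' : ((q:ℝ)) = (k:ℝ) + 1 := by exact_mod_cast hqv
    have hpR : ((p:ℝ)) = (k:ℝ) := by exact_mod_cast hpv
    have hmR : ((m j : ℤ):ℝ) = (j:ℝ) := by exact_mod_cast hmj
    have hnR : ((n j : ℤ):ℝ) = (j:ℝ) - 1 := by exact_mod_cast hnj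
    have hkR : (0:ℝ) < (k:ℝ) + 1 := by positivity
    rw [hpR, hqR', hmR, hnR]
    have : (k:ℝ) / ((k:ℝ)+1) - ((j:ℝ) - 1) / (j:ℝ) + 1 / ((k:ℝ)+1) - 1 / (j:ℝ) = 0 := by
      field_simp
      ring
    rw [this, zero_mul]
end

section
/- Let 0 < p < q be coprime with Hirzebruch-Jung data (m_j, n_j), 0 ≤ j ≤ k+1, where (m_0,n_0) = (0,-1), (m_1,n_1) = (1,0), (m_{k+1}, n_{k+1}) = (q,p), and let 0 = c_{-1} < c_0 < c_1 < ... < c_k, with c_{k+1} := 0 by convention. Define a, b by q·a = Σ_{j=0}^{k+1} (c_j - c_{j-1}) m_j and q·b = Σ_{j=0}^{k+1} (c_j - c_{j-1})(p m_j - q n_j). Then setting u_j = m_j (c_j - c_{j-1}) > 0 for 1 ≤ j ≤ k, one has a + b = Σ_{j=1}^k (p/q - n_j/m_j + 1/q - 1/m_j) u_j. -/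
open Finset

/-- The mass-coefficient identity (6.51): with Hirzebruch-Jung data `(m j, n j)`
for coprime `0 < p < q` (so `(m (k+1), n (k+1)) = (q, p)`), parameters
`0 = c₋₁ < c 0 < c 1 < ⋯ < c k` and `c (k+1) = 0` by convention, define `a, b`
by `q·a = ∑_{j=0}^{k+1} (c j - c (j-1)) m j` and
`q·b = ∑_{j=0}^{k+1} (c j - c (j-1)) (p m j - q n j)`. Then with
`u j = m j (c j - c (j-1)) > 0`,
`a + b = ∑_{j=1}^k (p/q - n j/m j + 1/q - 1/m j) u j`. -/
theorem stmt_18 (p q : ℕ) (hp : 0 < p) (hpq : p < q) (hcop : Nat.Coprime p q)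
    (k : ℕ) (hk : 1 ≤ k) (m n e : ℕ → ℤ) (c : ℕ → ℝ) (a b : ℝ)
    (he : ∀ j, 1 ≤ j → j ≤ k → 2 ≤ e j)
    (hm0 : m 0 = 0) (hn0 : n 0 = -1) (hm1 : m 1 = 1) (hn1 : n 1 = 0)
    (hmrec : ∀ j, 1 ≤ j → j ≤ k → m (j + 1) = e j * m j - m (j - 1))
    (hnrec : ∀ j, 1 ≤ j → j ≤ k → n (j + 1) = e j * n j - n (j - 1))
    (hmk : m (k + 1) = (q : ℤ)) (hnk : n (k + 1) = (p : ℤ))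
    (hc0 : 0 < c 0) (hcmono : ∀ j, j < k → c j < c (j + 1))
    (ha : (q : ℝ) * a = ∑ j ∈ range (k + 2),
        (if j = 0 then c 0 else if j = k + 1 then -(c k) else c j - c (j - 1)) * (m j : ℝ))
    (hb : (q : ℝ) * b = ∑ j ∈ range (k + 2),
        (if j = 0 then c 0 else if j = k + 1 then -(c k) else c j - c (j - 1)) *
          ((p : ℝ) * (m j : ℝ) - (q : ℝ) * (n j : ℝ))) :
    a + b = ∑ j ∈ Icc 1 k,
        ((p : ℝ) / q - (n j : ℝ) / (m j : ℝ) + 1 / q - 1 / (m j : ℝ)) *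
          ((m j : ℝ) * (c j - c (j - 1))) := by
  have hq : (q : ℝ) ≠ 0 := by
    have : 0 < q := lt_trans hp hpq
    positivity
  -- positivity of m j for 1 ≤ j ≤ k
  have H : ∀ j, j ≤ k → 0 ≤ m j ∧ m j < m (j + 1) := by
    intro j
    induction j with
    | zero => intro _; simp [hm0, hm1]
    | succ i ih =>
      intro hle
      have hi := ih (by omega)
      have he2 := he (i + 1) (by omega) hle
      have hr := hmrec (i + 1) (by omega) hle
      simp only [Nat.add_sub_cancel] at hr
      constructor
      · linarith [hi.1, hi.2]
      · nlinarith [hi.1, hi.2]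
  have hmpos : ∀ j, 1 ≤ j → j ≤ k → (0 : ℤ) < m j := by
    intro j h1 h2
    have h := H (j - 1) (by omega)
    rw [Nat.sub_add_cancel h1] at h
    linarith [h.1, h.2]
  apply mul_left_cancel₀ hq
  rw [mul_add, ha, hb, ← Finset.sum_add_distrib, Finset.mul_sum]
  rw [Finset.sum_range_succ, Finset.sum_range_succ']
  have hIcc : Icc 1 k = Ico 1 (k + 1) := by rw [Finset.Ico_add_one_right_eq_Icc]
  rw [hIcc, Finset.sum_Ico_eq_sum_range]
  simp only [Nat.add_sub_cancel]
  have key : ∀ i ∈ range k,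
      (if i + 1 = 0 then c 0 else if i + 1 = k + 1 then -(c k) else c (i + 1) - c i) * (m (i + 1) : ℝ) +
        (if i + 1 = 0 then c 0 else if i + 1 = k + 1 then -(c k) else c (i + 1) - c i) *
          ((p : ℝ) * (m (i + 1) : ℝ) - (q : ℝ) * (n (i + 1) : ℝ)) =
      (q : ℝ) * (((p : ℝ) / q - (n (1 + i) : ℝ) / (m (1 + i) : ℝ) + 1 / q - 1 / (m (1 + i) : ℝ)) *
          ((m (1 + i) : ℝ) * (c (1 + i) - c (1 + i - 1)))) + (q : ℝ) * (c (i + 1) - c i) := by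
    intro i hi
    rw [Finset.mem_range] at hi
    have h1 : i + 1 ≠ 0 := by omega
    have h2 : i + 1 ≠ k + 1 := by omega
    have h3 : 1 + i = i + 1 := by omega
    have hm : ((m (i + 1) : ℝ)) ≠ 0 := by
      have := hmpos (i + 1) (by omega) (by omega)
      exact_mod_cast this.ne'
    have h4 : 1 + i - 1 = i := by omega
    rw [h4]
    simp only [h1, h2, if_neg, if_false, h3, h4]
    field_simp
    ring
  rw [Finset.sum_congr rfl key, Finset.sum_add_distrib, ← Finset.mul_sum, ← Finset.mul_sum,
    Finset.sum_range_sub (fun i => c i)]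
  have h0 : (0 : ℕ) ≠ k + 1 := by omega
  have hk1 : k + 1 ≠ 0 := by omega
  simp only [if_pos rfl, if_neg h0, if_neg hk1, hm0, hn0, hmk, hnk]
  push_cast
  ring
end
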